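/- The halfspace depth region D(p) equals the intersection over all unit directions u of the closed halfspaces {x : ⟨u, x⟩ ≥ q_p(⟨u, Y⟩)}, where q_p(⟨u,Y⟩) is the p-quantile of the projection of Y onto u, provided the distribution of ⟨u,Y⟩ has no atoms for every u (i.e., all one-dimensional projections are continuous). -/

import Mathlib

open MeasureTheory Set ENNReal

noncomputable def quantile (μ : Measure ℝ) (τ : ℝ) : ℝ :=
  sInf {x : ℝ | ENNReal.ofReal τ ≤ μ (Iic x)}

noncomputable def depth {d : ℕ} (μ : Measure (EuclideanSpace ℝ (Fin d)))
    (x : EuclideanSpace ℝ (Fin d)) : ℝ≥0∞ :=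
  ⨅ u : {u : EuclideanSpace ℝ (Fin d) // ‖u‖ = 1},
    μ {y | (inner ℝ u.1 x : ℝ) ≤ inner ℝ u.1 y}

open Filter Topology in
lemma quantile_le_iff (ν : Measure ℝ) [IsProbabilityMeasure ν] {p t : ℝ}
    (hp0 : 0 < p) (hp1 : p < 1) :
    quantile ν p ≤ t ↔ ENNReal.ofReal p ≤ ν (Iic t) := by
  set S : Set ℝ := {x : ℝ | ENNReal.ofReal p ≤ ν (Iic x)} with hS
  have hup : ∀ ⦃a b : ℝ⦄, a ≤ b → a ∈ S → b ∈ S := fun a b hab ha =>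
    le_trans ha (measure_mono (Iic_subset_Iic.2 hab))
  have hplt1 : ENNReal.ofReal p < 1 := by
    rw [← ENNReal.ofReal_one]
    exact (ENNReal.ofReal_lt_ofReal_iff one_pos).2 hp1
  have hne : S.Nonempty := by
    have h1 : Tendsto (fun x : ℝ => ν (Iic x)) atTop (𝓝 (ν univ)) :=
      tendsto_measure_Iic_atTop ν
    rw [measure_univ] at h1
    obtain ⟨x, hx⟩ := (h1.eventually_const_le hplt1).exists
    exact ⟨x, hx⟩
  have hbot : Tendsto (fun n : ℕ => ν (Iic (-(n : ℝ)))) atTop (𝓝 0) := by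
    have hanti : Antitone fun n : ℕ => Iic (-(n : ℝ)) := fun n m hnm =>
      Iic_subset_Iic.2 (neg_le_neg (by exact_mod_cast hnm))
    have hint : ⋂ n : ℕ, Iic (-(n : ℝ)) = ∅ := by
      ext x
      simp only [mem_iInter, mem_Iic, mem_empty_iff_false, iff_false, not_forall, not_le]
      obtain ⟨n, hn⟩ := exists_nat_gt (-x)
      exact ⟨n, by linarith⟩
    have := tendsto_measure_iInter_atTop
      (μ := ν) (s := fun n : ℕ => Iic (-(n : ℝ)))
      (fun n => measurableSet_Iic.nullMeasurableSet) hanti ⟨0, measure_ne_top ν _⟩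
    rw [hint] at this
    rw [measure_empty] at this
    exact this
  have hbdd : BddBelow S := by
    have hp0' : (0 : ℝ≥0∞) < ENNReal.ofReal p := ENNReal.ofReal_pos.2 hp0
    obtain ⟨n, hn⟩ := (hbot.eventually_lt_const hp0').exists
    refine ⟨-(n : ℝ), fun s hs => ?_⟩
    by_contra hlt
    push_neg at hlt
    exact hn.not_ge (le_trans hs (measure_mono (Iic_subset_Iic.2 hlt.le)))
  have hqmem : sInf S ∈ S := by
    set q := sInf S with hq
    have hmem : ∀ n : ℕ, q + 1 / (n + 1) ∈ S := by
      intro n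
      have hpos : (0 : ℝ) < 1 / (n + 1) := by positivity
      have : q < q + 1 / (n + 1) := by linarith
      obtain ⟨s, hsS, hs⟩ := (csInf_lt_iff hbdd hne).1 (hq ▸ this)
      exact hup hs.le hsS
    have hIic : Iic q = ⋂ n : ℕ, Iic (q + 1 / (n + 1)) := by
      ext x
      simp only [mem_Iic, mem_iInter]
      constructor
      · intro hx n
        have hpos : (0 : ℝ) < 1 / (n + 1) := by positivity
        linarith
      · intro hx
        by_contra hlt
        push_neg at hlt
        obtain ⟨n, hn⟩ := exists_nat_one_div_lt (sub_pos.2 hlt)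
        linarith [hx n, hn]
    have hanti : Antitone fun n : ℕ => Iic (q + 1 / ((n : ℝ) + 1)) := by
      intro n m hnm
      apply Iic_subset_Iic.2
      have : (1 : ℝ) / (m + 1) ≤ 1 / (n + 1) := by
        apply one_div_le_one_div_of_le (by positivity)
        exact_mod_cast Nat.add_le_add_right hnm 1
      linarith
    have htend := tendsto_measure_iInter_atTop (μ := ν)
      (s := fun n : ℕ => Iic (q + 1 / ((n : ℝ) + 1)))
      (fun n => measurableSet_Iic.nullMeasurableSet) hanti ⟨0, measure_ne_top ν _⟩
    rw [← hIic] at htend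
    refine ge_of_tendsto htend (Eventually.of_forall fun n => ?_)
    exact hmem n
  constructor
  · intro h
    exact hup h hqmem
  · intro h
    exact csInf_le hbdd h

theorem depth_region_eq_inter_projection_halfspaces {d : ℕ}
    (μ : Measure (EuclideanSpace ℝ (Fin d))) [IsProbabilityMeasure μ]
    (hatomless : ∀ u : EuclideanSpace ℝ (Fin d), ‖u‖ = 1 →
      ∀ t : ℝ, μ {y | (inner ℝ u y : ℝ) = t} = 0)
    (p : ℝ) (hp : p ∈ Ioo (0:ℝ) 1) :
    {x : EuclideanSpace ℝ (Fin d) | ENNReal.ofReal p ≤ depth μ x}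
      = ⋂ u : {u : EuclideanSpace ℝ (Fin d) // ‖u‖ = 1},
          {x : EuclideanSpace ℝ (Fin d) |
            quantile (μ.map (fun y => (inner ℝ u.1 y : ℝ))) p ≤ inner ℝ u.1 x} := by
  have hmeas : ∀ u : EuclideanSpace ℝ (Fin d),
      Measurable fun y : EuclideanSpace ℝ (Fin d) => (inner ℝ u y : ℝ) :=
    fun u => (continuous_const.inner continuous_id).measurable
  have hprob : ∀ u : EuclideanSpace ℝ (Fin d),
      IsProbabilityMeasure (μ.map fun y => (inner ℝ u y : ℝ)) :=
    fun u => Measure.isProbabilityMeasure_map (hmeas u).aemeasurable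
  have hmap : ∀ (u : EuclideanSpace ℝ (Fin d)) (t : ℝ),
      (μ.map fun y => (inner ℝ u y : ℝ)) (Iic t) = μ {y | (inner ℝ u y : ℝ) ≤ t} := by
    intro u t
    rw [Measure.map_apply (hmeas u) measurableSet_Iic]
    rfl
  have key : ∀ (u : EuclideanSpace ℝ (Fin d)) (x : EuclideanSpace ℝ (Fin d)),
      {y : EuclideanSpace ℝ (Fin d) | (inner ℝ u x : ℝ) ≤ inner ℝ u y}
        = {y | (inner ℝ (-u) y : ℝ) ≤ inner ℝ (-u) x} := by
    intro u x
    ext y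
    simp only [mem_setOf_eq, inner_neg_left, neg_le_neg_iff]
  ext x
  simp only [mem_setOf_eq, mem_iInter, depth, le_iInf_iff]
  constructor
  · intro h u
    have := hprob u.1
    rw [quantile_le_iff _ hp.1 hp.2, hmap]
    have hneg : ‖-u.1‖ = 1 := by rw [norm_neg]; exact u.2
    have h2 := h ⟨-u.1, hneg⟩
    simpa only [key (-u.1) x, neg_neg] using h2
  · intro h u
    have hneg : ‖-u.1‖ = 1 := by rw [norm_neg]; exact u.2
    have := hprob (-u.1)
    have h2 := h ⟨-u.1, hneg⟩
    rw [quantile_le_iff _ hp.1 hp.2, hmap] at h2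
    rw [key u.1 x]
    exact h2
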